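/- Let N ≥ 1 and let f, g : [0, π] → ℝ^N be C¹ maps. For ρ ∈ (0, 1/2], define the linear interpolation map w on the half annulus {(r, θ) : 1 − ρ ≤ r ≤ 1, 0 ≤ θ ≤ π} (in polar coordinates) by w(r, θ) = f(θ) + ((r − (1 − ρ))/ρ)(g(θ) − f(θ)), so that w(1 − ρ, θ) = f(θ) and w(1, θ) = g(θ). Then the energy of w satisfies E(w) = ∫_{1−ρ}^{1} ∫_0^π (|∂_r w|² + r^{−2}|∂_θ w|²) r dθ dr ≤ ρ^{−1} ∫_0^π |f(θ) − g(θ)|² dθ + 4ρ ∫_0^π (|f'(θ)|² + |g'(θ)|²) dθ. (Energy bound for the linear interpolation band, the Euclidean core of the interpolation Lemmas 7.2 and 7.3.) -/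

import Mathlib

open MeasureTheory

lemma aux_band_bound {E : Type*} [NormedAddCommGroup E] [NormedSpace ℝ E]
    (u v : E) (A c r : ℝ) (hA : 0 ≤ A) (hc0 : 0 ≤ c) (hc1 : c ≤ 1)
    (hr0 : 1/2 ≤ r) (hr1 : r ≤ 1) :
    (A + (1 / r ^ 2) * ‖u + c • (v - u)‖ ^ 2) * r ≤ A + 4 * (‖u‖ ^ 2 + ‖v‖ ^ 2) := by
  have hrpos : (0:ℝ) < r := by linarith
  set x := ‖u‖ with hx
  set y := ‖v‖ with hy
  have hx0 : 0 ≤ x := norm_nonneg _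
  have hy0 : 0 ≤ y := norm_nonneg _
  have h1 : ‖u + c • (v - u)‖ ≤ (1 - c) * x + c * y := by
    have hrw : u + c • (v - u) = (1 - c) • u + c • v := by
      rw [sub_smul, one_smul, smul_sub]; abel
    rw [hrw]
    refine (norm_add_le _ _).trans ?_
    rw [norm_smul, norm_smul, Real.norm_eq_abs, Real.norm_eq_abs,
      abs_of_nonneg (by linarith), abs_of_nonneg hc0]
  set n0 := ‖u + c • (v - u)‖ with hn0
  have hn00 : 0 ≤ n0 := norm_nonneg _
  have hb : n0 ^ 2 ≤ 2 * (x ^ 2 + y ^ 2) := by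
    have h2 : (1 - c) * x + c * y ≤ x + y := by nlinarith
    have h3 : n0 ≤ x + y := h1.trans h2
    nlinarith [sq_nonneg (x - y)]
  have hinv : 1 / r ≤ 2 := by rw [div_le_iff₀ hrpos]; linarith
  have key : (1 / r ^ 2) * n0 ^ 2 * r = n0 ^ 2 * (1 / r) := by
    field_simp
  have h5 : (1 / r ^ 2) * n0 ^ 2 * r ≤ 2 * n0 ^ 2 := by
    rw [key]
    calc n0 ^ 2 * (1/r) ≤ n0 ^ 2 * 2 := mul_le_mul_of_nonneg_left hinv (sq_nonneg _)
      _ = 2 * n0 ^ 2 := by ring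
  have h6 : A * r ≤ A := mul_le_of_le_one_right hA hr1
  calc (A + (1 / r ^ 2) * n0 ^ 2) * r = A * r + (1 / r ^ 2) * n0 ^ 2 * r := by ring
    _ ≤ A + 2 * n0 ^ 2 := by linarith
    _ ≤ A + 4 * (x ^ 2 + y ^ 2) := by linarith



/-- Energy bound for the linear interpolation band (the Euclidean core of Lemmas 7.2 and 7.3):
for `C¹` maps `f, g : [0,π] → ℝ^N` and `ρ ∈ (0, 1/2]`, the linear interpolation
`w(r,θ) = f(θ) + ((r − (1 − ρ))/ρ)(g(θ) − f(θ))` on the half annulus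
`{1 − ρ ≤ r ≤ 1, 0 ≤ θ ≤ π}` has energy
`E(w) = ∫_{1−ρ}^1 ∫_0^π (|∂_r w|² + r^{−2}|∂_θ w|²) r ≤ ρ^{−1}∫|f − g|² + 4ρ∫(|f'|² + |g'|²)`. -/
theorem stmt_5 (N : ℕ) (hN : 1 ≤ N)
    (f g : ℝ → EuclideanSpace ℝ (Fin N))
    (hf : ContDiffOn ℝ 1 f (Set.Icc 0 Real.pi))
    (hg : ContDiffOn ℝ 1 g (Set.Icc 0 Real.pi))
    (ρ : ℝ) (hρ0 : 0 < ρ) (hρ : ρ ≤ 1 / 2)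
    (w : ℝ × ℝ → EuclideanSpace ℝ (Fin N))
    (hw : ∀ r θ : ℝ, w (r, θ) = f θ + ((r - (1 - ρ)) / ρ) • (g θ - f θ)) :
    (∫ r in (1 - ρ : ℝ)..1, ∫ θ in (0 : ℝ)..Real.pi,
        (‖fderiv ℝ w (r, θ) ((1 : ℝ), (0 : ℝ))‖ ^ 2
          + (1 / r ^ 2) * ‖fderiv ℝ w (r, θ) ((0 : ℝ), (1 : ℝ))‖ ^ 2) * r) ≤
      ρ⁻¹ * (∫ θ in (0 : ℝ)..Real.pi, ‖f θ - g θ‖ ^ 2) +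
        4 * ρ * ∫ θ in (0 : ℝ)..Real.pi,
          (‖derivWithin f (Set.Icc 0 Real.pi) θ‖ ^ 2
            + ‖derivWithin g (Set.Icc 0 Real.pi) θ‖ ^ 2) := by
  have hπ : (0:ℝ) < Real.pi := Real.pi_pos
  set S : Set ℝ := Set.Icc 0 Real.pi with hS
  set f' : ℝ → EuclideanSpace ℝ (Fin N) := fun t => derivWithin f S t with hf'
  set g' : ℝ → EuclideanSpace ℝ (Fin N) := fun t => derivWithin g S t with hg'
  have hUD : UniqueDiffOn ℝ S := uniqueDiffOn_Icc hπ
  have hf'c : ContinuousOn f' S := hf.continuousOn_derivWithin hUD le_rfl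
  have hg'c : ContinuousOn g' S := hg.continuousOn_derivWithin hUD le_rfl
  -- projections
  set pθ : ℝ → ℝ := fun t => max 0 (min t Real.pi) with hpθdef
  set pr : ℝ → ℝ := fun r => max (1 - ρ) (min r 1) with hprdef
  have hpθc : Continuous pθ := continuous_const.max (continuous_id.min continuous_const)
  have hprc : Continuous pr := continuous_const.max (continuous_id.min continuous_const)
  have hpθmem : ∀ t, pθ t ∈ S := by
    intro t
    constructor
    · exact le_max_left _ _
    · exact max_le hπ.le (min_le_right _ _)
  have hprmem : ∀ r, pr r ∈ Set.Icc (1 - ρ) 1 := by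
    intro r
    constructor
    · exact le_max_left _ _
    · exact max_le (by linarith) (min_le_right _ _)
  have hpθid : ∀ t ∈ S, pθ t = t := by
    intro t ht
    simp only [hpθdef]
    rw [min_eq_left ht.2, max_eq_right ht.1]
  have hprid : ∀ r ∈ Set.Icc (1 - ρ) 1, pr r = r := by
    intro r hr
    simp only [hprdef]
    rw [min_eq_left hr.2, max_eq_right hr.1]
  have hprpos : ∀ r, (0:ℝ) < pr r := fun r => lt_of_lt_of_le (by linarith) (hprmem r).1
  -- globally continuous versions
  set fc : ℝ → EuclideanSpace ℝ (Fin N) := fun t => f (pθ t) with hfc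
  set gc : ℝ → EuclideanSpace ℝ (Fin N) := fun t => g (pθ t) with hgc
  set f'c : ℝ → EuclideanSpace ℝ (Fin N) := fun t => f' (pθ t) with hf'cdef
  set g'c : ℝ → EuclideanSpace ℝ (Fin N) := fun t => g' (pθ t) with hg'cdef
  have hfcc : Continuous fc := hf.continuousOn.comp_continuous hpθc hpθmem
  have hgcc : Continuous gc := hg.continuousOn.comp_continuous hpθc hpθmem
  have hf'cc : Continuous f'c := hf'c.comp_continuous hpθc hpθmem
  have hg'cc : Continuous g'c := hg'c.comp_continuous hpθc hpθmem
  -- the explicit integrand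
  set Φ : ℝ → ℝ → ℝ := fun r t =>
    (ρ⁻¹ ^ 2 * ‖gc t - fc t‖ ^ 2
      + (1 / (pr r) ^ 2) * ‖f'c t + ((pr r - (1 - ρ)) / ρ) • (g'c t - f'c t)‖ ^ 2) * pr r
    with hΦdef
  have hΦcont : Continuous (Function.uncurry Φ) := by
    have h1 : Continuous fun p : ℝ × ℝ => (1:ℝ) / (pr p.1) ^ 2 :=
      continuous_const.div ((hprc.comp continuous_fst).pow 2)
        (fun p => pow_ne_zero 2 (hprpos p.1).ne')
    have h2 : Continuous fun p : ℝ × ℝ =>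
        ‖f'c p.2 + ((pr p.1 - (1 - ρ)) / ρ) • (g'c p.2 - f'c p.2)‖ ^ 2 := by
      apply Continuous.pow
      apply Continuous.norm
      exact (hf'cc.comp continuous_snd).add
        ((((hprc.comp continuous_fst).sub continuous_const).div_const ρ).smul
          ((hg'cc.comp continuous_snd).sub (hf'cc.comp continuous_snd)))
    have h3 : Continuous fun p : ℝ × ℝ => ρ⁻¹ ^ 2 * ‖gc p.2 - fc p.2‖ ^ 2 :=
      continuous_const.mul (((hgcc.comp continuous_snd).sub (hfcc.comp continuous_snd)).norm.pow 2)
    exact ((h3.add (h1.mul h2)).mul (hprc.comp continuous_fst))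
  set G : ℝ → ℝ := fun r => ∫ t in (0:ℝ)..Real.pi, Φ r t with hGdef
  have hGcont : Continuous G :=
    intervalIntegral.continuous_parametric_intervalIntegral_of_continuous' hΦcont 0 Real.pi
  -- fderiv computation
  have hfder : ∀ (r : ℝ), ∀ θ ∈ Set.Ioo (0:ℝ) Real.pi,
      fderiv ℝ w (r, θ) ((1:ℝ), (0:ℝ)) = ρ⁻¹ • (g θ - f θ) ∧
      fderiv ℝ w (r, θ) ((0:ℝ), (1:ℝ)) = f' θ + ((r - (1 - ρ)) / ρ) • (g' θ - f' θ) := by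
    intro r θ hθ
    have hnh : S ∈ nhds θ := Icc_mem_nhds hθ.1 hθ.2
    have hfd : DifferentiableAt ℝ f θ :=
      ((hf.differentiableOn one_ne_zero) θ (Set.Ioo_subset_Icc_self hθ)).differentiableAt hnh
    have hgd : DifferentiableAt ℝ g θ :=
      ((hg.differentiableOn one_ne_zero) θ (Set.Ioo_subset_Icc_self hθ)).differentiableAt hnh
    have hfw : f' θ = deriv f θ := derivWithin_of_mem_nhds hnh
    have hgw : g' θ = deriv g θ := derivWithin_of_mem_nhds hnh
    have hwe : w = fun p : ℝ × ℝ => f p.2 + (ρ⁻¹ * (p.1 - (1 - ρ))) • (g p.2 - f p.2) := by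
      funext p
      rcases p with ⟨a, b⟩
      rw [hw a b, div_eq_inv_mul]
    set F := deriv f θ
    set Gd := deriv g θ
    have h1 : HasFDerivAt (fun p : ℝ × ℝ => f p.2)
        ((ContinuousLinearMap.smulRight (1 : ℝ →L[ℝ] ℝ) F).comp (ContinuousLinearMap.snd ℝ ℝ ℝ)) (r, θ) :=
      (hfd.hasDerivAt.hasFDerivAt).comp (r, θ) (hasFDerivAt_snd)
    have h2 : HasFDerivAt (fun p : ℝ × ℝ => g p.2 - f p.2)
        (((ContinuousLinearMap.smulRight (1 : ℝ →L[ℝ] ℝ) Gd).comp (ContinuousLinearMap.snd ℝ ℝ ℝ))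
          - ((ContinuousLinearMap.smulRight (1 : ℝ →L[ℝ] ℝ) F).comp (ContinuousLinearMap.snd ℝ ℝ ℝ))) (r, θ) :=
      ((hgd.hasDerivAt.hasFDerivAt).comp (r, θ) (hasFDerivAt_snd)).sub h1
    have h3 : HasFDerivAt (fun p : ℝ × ℝ => ρ⁻¹ * (p.1 - (1 - ρ)))
        (ρ⁻¹ • (ContinuousLinearMap.fst ℝ ℝ ℝ)) (r, θ) := by
      simpa using ((hasFDerivAt_fst (p := ((r,θ) : ℝ × ℝ))).sub_const (1-ρ)).const_mul ρ⁻¹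
    have h4 := h1.add (h3.smul h2)
    have h5 : HasFDerivAt w _ (r, θ) :=
      h4.congr_of_eventuallyEq (Filter.Eventually.of_forall (fun p => congrFun hwe p))
    rw [h5.fderiv]
    constructor
    · simp
    · simp [hfw, hgw, div_eq_inv_mul]
  -- pointwise a.e. equality of integrands for fixed r in the band
  have hInnerEq : ∀ r ∈ Set.Icc (1 - ρ) 1,
      (∫ θ in (0:ℝ)..Real.pi,
        (‖fderiv ℝ w (r, θ) ((1:ℝ), (0:ℝ))‖ ^ 2
          + (1 / r ^ 2) * ‖fderiv ℝ w (r, θ) ((0:ℝ), (1:ℝ))‖ ^ 2) * r) = G r := by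
    intro r hr
    apply intervalIntegral.integral_congr_ae
    have hsing : (volume : Measure ℝ) {Real.pi} = 0 := measure_singleton _
    have hae : ∀ᵐ θ : ℝ, θ ∉ ({Real.pi} : Set ℝ) := measure_eq_zero_iff_ae_notMem.mp hsing
    filter_upwards [hae] with θ hθne hθmem
    rw [Set.uIoc_of_le hπ.le] at hθmem
    have hθIoo : θ ∈ Set.Ioo (0:ℝ) Real.pi :=
      ⟨hθmem.1, lt_of_le_of_ne hθmem.2 (fun h => hθne (by simp [h]))⟩
    obtain ⟨e1, e2⟩ := hfder r θ hθIoo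
    have hθS : θ ∈ S := Set.Ioo_subset_Icc_self hθIoo
    rw [e1, e2]
    simp only [hΦdef, hfc, hgc, hf'cdef, hg'cdef]
    rw [hprid r hr, hpθid θ hθS]
    have hn1 : ‖ρ⁻¹ • (g θ - f θ)‖ ^ 2 = ρ⁻¹ ^ 2 * ‖g θ - f θ‖ ^ 2 := by
      rw [norm_smul, mul_pow, Real.norm_eq_abs, sq_abs]
    rw [hn1]
  -- the pointwise upper bound function
  set M : ℝ → ℝ := fun t => ρ⁻¹ ^ 2 * ‖gc t - fc t‖ ^ 2 + 4 * (‖f'c t‖ ^ 2 + ‖g'c t‖ ^ 2)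
    with hMdef
  have hMc : Continuous M :=
    (continuous_const.mul ((hgcc.sub hfcc).norm.pow 2)).add
      (continuous_const.mul ((hf'cc.norm.pow 2).add (hg'cc.norm.pow 2)))
  -- pointwise bound Φ r t ≤ M t
  have hptbound : ∀ r ∈ Set.Icc (1 - ρ) 1, ∀ t, Φ r t ≤ M t := by
    intro r hr t
    simp only [hΦdef, hMdef]
    rw [hprid r hr]
    have hr0 : (1:ℝ)/2 ≤ r := by have := hr.1; linarith
    have hc0 : 0 ≤ (r - (1 - ρ)) / ρ := div_nonneg (by linarith [hr.1]) hρ0.le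
    have hc1 : (r - (1 - ρ)) / ρ ≤ 1 := by
      rw [div_le_one hρ0]
      linarith [hr.2]
    exact aux_band_bound (f'c t) (g'c t) (ρ⁻¹ ^ 2 * ‖gc t - fc t‖ ^ 2) _ r
      (mul_nonneg (sq_nonneg _) (sq_nonneg _)) hc0 hc1 hr0 hr.2
  set C : ℝ := ∫ t in (0:ℝ)..Real.pi, M t with hCdef
  have hGle : ∀ r ∈ Set.Icc (1 - ρ) 1, G r ≤ C := by
    intro r hr
    apply intervalIntegral.integral_mono_on hπ.le
    · exact (hΦcont.comp (Continuous.prodMk_right r)).intervalIntegrable _ _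
    · exact hMc.intervalIntegrable _ _
    · intro t _
      exact hptbound r hr t
  -- integrability of the inner integral as a function of r
  have hInnerInt : IntervalIntegrable (fun r => ∫ θ in (0:ℝ)..Real.pi,
      (‖fderiv ℝ w (r, θ) ((1:ℝ), (0:ℝ))‖ ^ 2
        + (1 / r ^ 2) * ‖fderiv ℝ w (r, θ) ((0:ℝ), (1:ℝ))‖ ^ 2) * r) volume (1 - ρ) 1 := by
    apply ContinuousOn.intervalIntegrable
    have huIcc : Set.uIcc (1 - ρ) 1 = Set.Icc (1 - ρ) 1 := Set.uIcc_of_le (by linarith)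
    rw [huIcc]
    exact (hGcont.continuousOn).congr hInnerEq
  -- main estimate
  have hmain : (∫ r in (1 - ρ : ℝ)..1, ∫ θ in (0 : ℝ)..Real.pi,
        (‖fderiv ℝ w (r, θ) ((1 : ℝ), (0 : ℝ))‖ ^ 2
          + (1 / r ^ 2) * ‖fderiv ℝ w (r, θ) ((0 : ℝ), (1 : ℝ))‖ ^ 2) * r) ≤
      ∫ _ in (1 - ρ : ℝ)..1, C := by
    apply intervalIntegral.integral_mono_on (by linarith) hInnerInt (intervalIntegrable_const)
    intro r hr
    rw [hInnerEq r hr]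
    exact hGle r hr
  have hconst : (∫ _ in (1 - ρ : ℝ)..1, C) = ρ * C := by
    rw [intervalIntegral.integral_const, smul_eq_mul]
    ring
  -- compute C
  have hCeq : C = ρ⁻¹ ^ 2 * (∫ θ in (0:ℝ)..Real.pi, ‖f θ - g θ‖ ^ 2)
      + 4 * ∫ θ in (0:ℝ)..Real.pi, (‖f' θ‖ ^ 2 + ‖g' θ‖ ^ 2) := by
    have hMeq : (∫ t in (0:ℝ)..Real.pi, M t) =
        ∫ t in (0:ℝ)..Real.pi, (ρ⁻¹ ^ 2 * ‖f t - g t‖ ^ 2 + 4 * (‖f' t‖ ^ 2 + ‖g' t‖ ^ 2)) := by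
      apply intervalIntegral.integral_congr
      intro t ht
      rw [Set.uIcc_of_le hπ.le] at ht
      simp only [hMdef, hfc, hgc, hf'cdef, hg'cdef, hpθid t ht]
      rw [norm_sub_rev (g t) (f t)]
    rw [hCdef, hMeq]
    rw [intervalIntegral.integral_add, intervalIntegral.integral_const_mul,
      intervalIntegral.integral_const_mul]
    · apply IntervalIntegrable.const_mul
      apply ContinuousOn.intervalIntegrable
      rw [Set.uIcc_of_le hπ.le]
      exact ((hf.continuousOn.sub hg.continuousOn).norm.pow 2)
    · apply IntervalIntegrable.const_mul
      apply ContinuousOn.intervalIntegrable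
      rw [Set.uIcc_of_le hπ.le]
      exact ((hf'c.norm.pow 2).add (hg'c.norm.pow 2))
  calc (∫ r in (1 - ρ : ℝ)..1, ∫ θ in (0 : ℝ)..Real.pi,
        (‖fderiv ℝ w (r, θ) ((1 : ℝ), (0 : ℝ))‖ ^ 2
          + (1 / r ^ 2) * ‖fderiv ℝ w (r, θ) ((0 : ℝ), (1 : ℝ))‖ ^ 2) * r)
      ≤ ∫ _ in (1 - ρ : ℝ)..1, C := hmain
    _ = ρ * C := hconst
    _ = ρ⁻¹ * (∫ θ in (0 : ℝ)..Real.pi, ‖f θ - g θ‖ ^ 2) +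
        4 * ρ * ∫ θ in (0 : ℝ)..Real.pi, (‖f' θ‖ ^ 2 + ‖g' θ‖ ^ 2) := by
      rw [hCeq]
      field_simp
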